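/- Let (A_k)_{k≥1} be a nonnegative real sequence and K a positive integer such that A_k ≤ A_{k−1} ≤ 1 for all k ≥ K + 1. Suppose there are positive constants α, β, γ with γ ≥ 1 such that A_k ≤ α (A_{k−1} − A_k)^γ + β (A_{k−1} − A_k) for all k ≥ K + 1. Then A_k ≤ ((α+β)/(1+α+β))^{k−K} · A_K for all k ≥ K. -/
import Mathlib


/-- Lemma 2.3, item 1 (`γ ≥ 1`): linear convergence of the sequence. -/
theorem rate_lemma_linear
    (A : ℕ → ℝ) (K : ℕ) (hK : 1 ≤ K)
    (hA : ∀ k, 0 ≤ A k)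
    (hmono : ∀ k, K + 1 ≤ k → A k ≤ A (k - 1) ∧ A (k - 1) ≤ 1)
    (α β γ : ℝ) (hα : 0 < α) (hβ : 0 < β) (hγ : 1 ≤ γ)
    (hcond : ∀ k, K + 1 ≤ k → A k ≤ α * (A (k - 1) - A k) ^ γ + β * (A (k - 1) - A k)) :
    ∀ k, K ≤ k → A k ≤ ((α + β) / (1 + α + β)) ^ (k - K) * A K := by
  have hden : (0:ℝ) < 1 + α + β := by linarith
  have hstep : ∀ k, K + 1 ≤ k → A k ≤ ((α + β) / (1 + α + β)) * A (k - 1) := by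
    intro k hk
    obtain ⟨h1, h2⟩ := hmono k hk
    set d := A (k - 1) - A k with hd
    have hd0 : 0 ≤ d := by linarith
    have hd1 : d ≤ 1 := by have := hA k; linarith
    have hpow : d ^ γ ≤ d := by
      rcases eq_or_lt_of_le hd0 with h | h
      · rw [← h, Real.zero_rpow (by linarith : γ ≠ 0)]
      · calc d ^ γ ≤ d ^ (1:ℝ) := Real.rpow_le_rpow_of_exponent_ge h hd1 hγ
          _ = d := Real.rpow_one d
    have h3 : A k ≤ (α + β) * d := by
      have := hcond k hk
      nlinarith
    have : A k * (1 + α + β) ≤ (α + β) * A (k - 1) := by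
      simp only [hd] at h3; nlinarith
    rw [div_mul_eq_mul_div, le_div_iff₀ hden]
    linarith
  intro k hk
  induction k, hk using Nat.le_induction with
  | base => simp
  | succ n hn ih =>
    have hnk : K + 1 ≤ n + 1 := by omega
    have := hstep (n + 1) hnk
    simp only [Nat.add_sub_cancel] at this
    have hr0 : 0 ≤ (α + β) / (1 + α + β) := by positivity
    calc A (n + 1) ≤ ((α + β) / (1 + α + β)) * A n := this
      _ ≤ ((α + β) / (1 + α + β)) * (((α + β) / (1 + α + β)) ^ (n - K) * A K) := by
          exact mul_le_mul_of_nonneg_left ih hr0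
      _ = ((α + β) / (1 + α + β)) ^ (n + 1 - K) * A K := by
          rw [← mul_assoc, ← pow_succ']
          congr 2
          omega
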